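/- Let M be a Riemannian manifold without boundary, K a compact subset of the open unit cotangent disk bundle DT*M = {(q,p) ∈ T*M : |p| < 1}, and h ∈ C₀^∞(M) with |dh| ≥ 1 on π_M(K), where π_M : T*M → M is the projection. Then the Hamiltonian H := 2·h∘π_M displaces K, i.e., the time-1 Hamiltonian flow φ of H satisfies φ(K) ∩ K = ∅. -/

import Mathlib

open scoped Manifold

/-- displacement of a compact subset of the unit cotangent disk
bundle.  The cotangent bundle of `M` is encoded as `Σ x : M, T_xM →L[ℝ] ℝ`, with the
fiberwise dual norm `gd` induced by the Riemannian metric (a norm on each cotangent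
fiber).  If `K` is a compact subset of `DT*M = {(q,p) : |p| < 1}` and `h` is a
compactly supported smooth function with `|dh| ≥ 1` on `π_M(K)`, then the time-1
Hamiltonian flow of `H = 2·h∘π_M`, which is the fiberwise translation
`(q,p) ↦ (q, p + 2 dh_q)`, displaces `K`. -/
theorem stmt_1 {n : ℕ} {M : Type*} [TopologicalSpace M]
    [ChartedSpace (EuclideanSpace ℝ (Fin n)) M] [IsManifold (𝓡 n) (⊤ : ℕ∞) M]
    (gd : (x : M) → (TangentSpace (𝓡 n) x →L[ℝ] ℝ) → ℝ)
    (gd_add : ∀ (x : M) (p q : TangentSpace (𝓡 n) x →L[ℝ] ℝ),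
      gd x (p + q) ≤ gd x p + gd x q)
    (gd_smul : ∀ (x : M) (a : ℝ) (p : TangentSpace (𝓡 n) x →L[ℝ] ℝ),
      gd x (a • p) = |a| * gd x p)
    (K : Set (Σ x : M, TangentSpace (𝓡 n) x →L[ℝ] ℝ))
    (hKcpt : IsCompact K)
    (hK : ∀ qp ∈ K, gd qp.1 qp.2 < 1)
    (h : M → ℝ) (hsm : ContMDiff (𝓡 n) 𝓘(ℝ, ℝ) (⊤ : ℕ∞) h) (hsupp : HasCompactSupport h)
    (hdh : ∀ qp ∈ K, 1 ≤ gd qp.1 (show TangentSpace (𝓡 n) qp.1 →L[ℝ] ℝ from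
      mfderiv (𝓡 n) 𝓘(ℝ, ℝ) h qp.1)) :
    Disjoint
      ((fun qp : Σ x : M, TangentSpace (𝓡 n) x →L[ℝ] ℝ =>
        (⟨qp.1, qp.2 + (2 : ℝ) • (show TangentSpace (𝓡 n) qp.1 →L[ℝ] ℝ from
          mfderiv (𝓡 n) 𝓘(ℝ, ℝ) h qp.1)⟩ : Σ x : M, TangentSpace (𝓡 n) x →L[ℝ] ℝ)) '' K)
      K := by
  rw [Set.disjoint_left]
  rintro a ⟨qp, hqp, rfl⟩ haK
  obtain ⟨q, p⟩ := qp
  set d : TangentSpace (𝓡 n) q →L[ℝ] ℝ := mfderiv (𝓡 n) 𝓘(ℝ, ℝ) h q with hd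
  have h1 : gd q (p + (2 : ℝ) • d) < 1 := hK _ haK
  have h2 : gd q p < 1 := hK _ hqp
  have h3 : (1 : ℝ) ≤ gd q d := hdh _ hqp
  have key : (2 : ℝ) • d = (p + (2 : ℝ) • d) + (-1 : ℝ) • p := by
    module
  have h4 := gd_add q (p + (2 : ℝ) • d) ((-1 : ℝ) • p)
  rw [← key] at h4
  rw [gd_smul, gd_smul] at h4
  simp at h4
  linarith
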